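/- If G is a 5-regular graph containing a K_{4,4}-factor K (a spanning subgraph whose components are all copies of K_{4,4}), and M = E(G) \ E(K), then G admits an M-centered P_5-decomposition. -/

import Mathlib

open SimpleGraph

/-! Auxiliary template facts on `K_{4,4}` over `Fin 4 ⊕ Fin 4`. -/

private abbrev FF := Fin 4 ⊕ Fin 4
private abbrev K44 : SimpleGraph FF := completeBipartiteGraph (Fin 4) (Fin 4)

private instance K44dec : DecidableRel K44.Adj := fun f g => by
  simp only [completeBipartiteGraph]; infer_instance

private def sF : FF → FF
  | .inl i => .inr i
  | .inr i => .inl (i - 1)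

private def tF : FF → FF
  | .inl i => .inl (i + 1)
  | .inr i => .inr (i + 1)

private def oppF : FF → FF
  | .inl i => .inl (i + 2)
  | .inr i => .inr (i + 2)

private def coversF (h f g : FF) : Prop :=
  (f = h ∧ g = sF h) ∨ (f = sF h ∧ g = tF h) ∨ (g = h ∧ f = sF h) ∨ (g = sF h ∧ f = tF h)

private instance (h f g : FF) : Decidable (coversF h f g) := by
  unfold coversF; infer_instance

private lemma L1 : ∀ f : FF, K44.Adj f (sF f) ∧ K44.Adj (sF f) (tF f) ∧ f ≠ sF f ∧
    f ≠ tF f ∧ sF f ≠ tF f := by decide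

private lemma L2cov : ∀ f g : FF, K44.Adj f g → ∃ h, coversF h f g := by decide

private lemma L2unique : ∀ f g h h' : FF, coversF h f g → coversF h' f g → h = h' := by decide

private lemma L3 : ∀ f : FF, f ≠ oppF f ∧ f ≠ sF (oppF f) ∧ f ≠ tF (oppF f) ∧
    sF f ≠ oppF f ∧ sF f ≠ sF (oppF f) ∧ sF f ≠ tF (oppF f) ∧
    tF f ≠ oppF f ∧ tF f ≠ sF (oppF f) ∧ tF f ≠ tF (oppF f) := by decide

set_option maxRecDepth 10000 in
private lemma Lrel4 : ∀ q : Fin 4 → Option (Fin 4),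
    (∀ i j, q i = some j → q j = some i ∧ i ≠ j) →
    ∃ σ : Equiv.Perm (Fin 4), ∀ i j, q i = some j → σ j = σ i + 2 := by decide

private lemma K44deg : ∀ f : FF, (K44.neighborSet f).toFinset.card = 4 := by decide

theorem stmt_9 {V : Type*} [Fintype V]
    (G K : SimpleGraph V) (hKG : K ≤ G)
    (hfactor : ∀ c : K.ConnectedComponent,
      Nonempty ((K.induce c.supp) ≃g completeBipartiteGraph (Fin 4) (Fin 4)))
    (hreg : ∀ v : V, (G.neighborSet v).ncard = 5) :
    ∃ D : Set (Σ u : V, Σ v : V, G.Walk u v),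
      (∀ T ∈ D, T.2.2.IsPath ∧ T.2.2.length = 5 ∧
        ∃ e ∈ G.edgeSet \ K.edgeSet, T.2.2.edges[2]? = some e) ∧
      ∀ e ∈ G.edgeSet, ∃! T, T ∈ D ∧ e ∈ T.2.2.edges := by
  classical
  set cc : V → K.ConnectedComponent := K.connectedComponentMk with hcc
  have hmem : ∀ v : V, v ∈ (cc v).supp := fun v => rfl
  have hsuppmem : ∀ {v w : V}, K.Adj v w → w ∈ (cc v).supp := by
    intro v w h
    exact (ConnectedComponent.mem_supp_iff _ _).mpr
      (ConnectedComponent.sound h.symm.reachable)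
  have hcceq : ∀ {c : K.ConnectedComponent} {v : V}, v ∈ c.supp → cc v = c :=
    fun {c v} h => (ConnectedComponent.mem_supp_iff _ _).mp h
  -- Step A: K-degree is 4, define the matching partner `m`
  have hKdeg : ∀ v : V, (K.neighborSet v).ncard = 4 := by
    intro v
    have φ := (hfactor (cc v)).some
    have e1 : K.neighborSet v ≃ (K.induce (cc v).supp).neighborSet ⟨v, hmem v⟩ :=
      ⟨fun w => ⟨⟨w.1, hsuppmem w.2⟩, w.2⟩, fun w => ⟨w.1.1, w.2⟩,
        fun w => rfl, fun w => rfl⟩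
    have e2 := e1.trans (φ.mapNeighborSet ⟨v, hmem v⟩)
    rw [← Nat.card_coe_set_eq, Nat.card_congr e2, Nat.card_coe_set_eq,
      Set.ncard_eq_toFinset_card']
    exact K44deg _
  have hsub : ∀ v : V, K.neighborSet v ⊆ G.neighborSet v := fun v w h => hKG h
  have hdiff1 : ∀ v : V, ∃ a, G.neighborSet v \ K.neighborSet v = {a} := by
    intro v
    rw [← Set.ncard_eq_one, Set.ncard_diff (hsub v) ((K.neighborSet v).toFinite),
      hreg v, hKdeg v]
  choose m hm using hdiff1
  have hmG : ∀ v, G.Adj v (m v) := fun v => by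
    have : m v ∈ G.neighborSet v \ K.neighborSet v := (hm v) ▸ rfl
    exact this.1
  have hmK : ∀ v, ¬ K.Adj v (m v) := fun v => by
    have : m v ∈ G.neighborSet v \ K.neighborSet v := (hm v) ▸ rfl
    exact this.2
  have hmuniq : ∀ v w, G.Adj v w → ¬ K.Adj v w → w = m v := by
    intro v w h1 h2
    have : w ∈ G.neighborSet v \ K.neighborSet v := ⟨h1, h2⟩
    rw [hm v] at this; exact this
  have hmm : ∀ v, m (m v) = v := fun v =>
    (hmuniq (m v) v (hmG v).symm (fun h => hmK v h.symm)).symm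
  have hmne : ∀ v, m v ≠ v := by
    intro v h
    have := hmG v; rw [h] at this; exact G.loopless.irrefl v this
  -- Step B: good labelings of the components
  have key : ∀ c : K.ConnectedComponent, ∃ ψ : (K.induce c.supp) ≃g K44,
      ∀ (v : c.supp) (h : m v.val ∈ c.supp), ψ ⟨m v.val, h⟩ = oppF (ψ v) := by
    intro c
    have φ := (hfactor c).some
    set q : FF → Option FF := fun f =>
      if h : m (φ.symm f).val ∈ c.supp then some (φ ⟨m (φ.symm f).val, h⟩) else none with hqdef
    have hsymmapp : ∀ v : c.supp, φ.symm (φ v) = v := fun v => φ.toEquiv.symm_apply_apply v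
    have happsymm : ∀ f : FF, φ (φ.symm f) = f := fun f => φ.toEquiv.apply_symm_apply f
    have hq : ∀ (v : c.supp) (h : m v.val ∈ c.supp),
        q (φ v) = some (φ ⟨m v.val, h⟩) := by
      intro v h
      have h' : m ((φ.symm (φ v)) : c.supp).val ∈ c.supp := by rw [hsymmapp]; exact h
      simp only [hqdef]
      rw [dif_pos h']
      have heq : (⟨m ((φ.symm (φ v)) : c.supp).val, h'⟩ : c.supp) = ⟨m v.val, h⟩ :=
        Subtype.ext (congrArg (fun w : c.supp => m w.val) (hsymmapp v))
      rw [heq]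
    have hq2 : ∀ f g, q f = some g →
        m ((φ.symm f) : c.supp).val = ((φ.symm g) : c.supp).val := by
      intro f g hfg
      simp only [hqdef] at hfg
      split at hfg
      · next h =>
        injection hfg with hfg
        rw [← hfg, hsymmapp]
      · exact absurd hfg (by simp)
    have hq3 : ∀ f g, q f = some g → q g = some f := by
      intro f g hfg
      have h2 := hq2 f g hfg
      have hm1 : m ((φ.symm g) : c.supp).val = ((φ.symm f) : c.supp).val := by
        rw [← h2, hmm]
      have hmemg : m ((φ.symm g) : c.supp).val ∈ c.supp := by
        rw [hm1]; exact ((φ.symm f) : c.supp).2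
      simp only [hqdef]
      rw [dif_pos hmemg]
      congr 1
      have : (⟨m ((φ.symm g) : c.supp).val, hmemg⟩ : c.supp) = φ.symm f :=
        Subtype.ext hm1
      rw [this, happsymm]
    have hq4 : ∀ f g, q f = some g → ¬ K44.Adj f g ∧ f ≠ g := by
      intro f g hfg
      have h2 := hq2 f g hfg
      constructor
      · intro hadj
        have hadj' : K44.Adj (φ (φ.symm f)) (φ (φ.symm g)) := by
          rw [happsymm, happsymm]; exact hadj
        have hind : (K.induce c.supp).Adj (φ.symm f) (φ.symm g) := φ.map_adj_iff.mp hadj'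
        have hK : K.Adj ((φ.symm f) : c.supp).val ((φ.symm g) : c.supp).val := hind
        rw [← h2] at hK
        exact hmK _ hK
      · intro hfg'
        rw [hfg'] at h2
        exact hmne _ h2
    have hpartL : ∀ (i : Fin 4) (g : FF), q (.inl i) = some g → ∃ j, g = .inl j := by
      intro i g hg
      rcases g with j | j
      · exact ⟨j, rfl⟩
      · exact absurd (hq4 _ _ hg).1 (by simp [completeBipartiteGraph])
    have hpartR : ∀ (i : Fin 4) (g : FF), q (.inr i) = some g → ∃ j, g = .inr j := by
      intro i g hg
      rcases g with j | j
      · exact absurd (hq4 _ _ hg).1 (by simp [completeBipartiteGraph])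
      · exact ⟨j, rfl⟩
    set qL : Fin 4 → Option (Fin 4) := fun i => (q (.inl i)).bind
      (fun g => match g with | .inl j => some j | .inr _ => none) with hqLdef
    set qR : Fin 4 → Option (Fin 4) := fun i => (q (.inr i)).bind
      (fun g => match g with | .inl _ => none | .inr j => some j) with hqRdef
    have hqLspec : ∀ i j, qL i = some j ↔ q (.inl i) = some (.inl j) := by
      intro i j
      rcases hg : q (.inl i) with _ | (k | k) <;> simp [hqLdef, hg]
    have hqRspec : ∀ i j, qR i = some j ↔ q (.inr i) = some (.inr j) := by
      intro i j
      rcases hg : q (.inr i) with _ | (k | k) <;> simp [hqRdef, hg]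
    obtain ⟨σ, hσ⟩ := Lrel4 qL (by
      intro i j hij
      rw [hqLspec] at hij
      refine ⟨(hqLspec j i).mpr (hq3 _ _ hij), fun hne => ?_⟩
      exact (hq4 _ _ hij).2 (by rw [hne])
      )
    obtain ⟨τ, hτ⟩ := Lrel4 qR (by
      intro i j hij
      rw [hqRspec] at hij
      refine ⟨(hqRspec j i).mpr (hq3 _ _ hij), fun hne => ?_⟩
      exact (hq4 _ _ hij).2 (by rw [hne])
      )
    let πiso : K44 ≃g K44 :=
      ⟨Equiv.sumCongr σ τ, by
        intro a b
        cases a <;> cases b <;> simp [completeBipartiteGraph, Equiv.sumCongr]⟩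
    have hπ : ∀ f : FF, πiso f = Sum.map σ τ f := fun f => by cases f <;> rfl
    refine ⟨φ.trans πiso, ?_⟩
    intro v h
    have htrans : ∀ w : c.supp, (φ.trans πiso) w = πiso (φ w) := fun w => rfl
    rw [htrans, htrans]
    have hqv := hq v h
    rcases hfv : (φ v : FF) with i | i
    · obtain ⟨j, hj⟩ := hpartL i (φ ⟨m v.val, h⟩) (by rw [← hfv]; exact hqv)
      rw [hj, hπ, hπ]
      have : σ j = σ i + 2 := hσ i j ((hqLspec i j).mpr (by rw [← hfv, ← hj]; exact hqv))
      simp [Sum.map, oppF, this]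
    · obtain ⟨j, hj⟩ := hpartR i (φ ⟨m v.val, h⟩) (by rw [← hfv]; exact hqv)
      rw [hj, hπ, hπ]
      have : τ j = τ i + 2 := hτ i j ((hqRspec i j).mpr (by rw [← hfv, ← hj]; exact hqv))
      simp [Sum.map, oppF, this]
  choose ψ hψ using key
  -- Step C: the rooted 2-paths
  have main : ∃ x y : V → V,
      (∀ v, K.Adj v (x v)) ∧ (∀ v, K.Adj (x v) (y v)) ∧
      (∀ a b, K.Adj a b → ∃! v,
        ((a = v ∧ b = x v) ∨ (a = x v ∧ b = y v) ∨ (b = v ∧ a = x v) ∨ (b = x v ∧ a = y v))) ∧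
      (∀ v, List.Nodup [y v, x v, v, m v, x (m v), y (m v)]) := by
    set X : V → V := fun v => ((ψ (cc v)).symm (sF (ψ (cc v) ⟨v, hmem v⟩))).val with hXdef
    set Y : V → V := fun v => ((ψ (cc v)).symm (tF (ψ (cc v) ⟨v, hmem v⟩))).val with hYdef
    have happ : ∀ (c) (f : FF), ψ c ((ψ c).symm f) = f :=
      fun c f => (ψ c).toEquiv.apply_symm_apply f
    have hXc : ∀ (c) (u : V) (h : u ∈ c.supp),
        X u = ((ψ c).symm (sF (ψ c ⟨u, h⟩))).val := by
      intro c u h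
      obtain rfl := hcceq h
      rfl
    have hYc : ∀ (c) (u : V) (h : u ∈ c.supp),
        Y u = ((ψ c).symm (tF (ψ c ⟨u, h⟩))).val := by
      intro c u h
      obtain rfl := hcceq h
      rfl
    have hXmem : ∀ (c : K.ConnectedComponent) (u : V) (h : u ∈ c.supp), X u ∈ c.supp := by
      intro c u h; rw [hXc c u h]; exact Subtype.prop _
    have hYmem : ∀ (c : K.ConnectedComponent) (u : V) (h : u ∈ c.supp), Y u ∈ c.supp := by
      intro c u h; rw [hYc c u h]; exact Subtype.prop _
    have hXF : ∀ (c) (u : V) (h : u ∈ c.supp),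
        ψ c ⟨X u, hXmem c u h⟩ = sF (ψ c ⟨u, h⟩) := by
      intro c u h
      have heq : (⟨X u, hXmem c u h⟩ : c.supp) = (ψ c).symm (sF (ψ c ⟨u, h⟩)) :=
        Subtype.ext (hXc c u h)
      rw [heq, happ]
    have hYF : ∀ (c) (u : V) (h : u ∈ c.supp),
        ψ c ⟨Y u, hYmem c u h⟩ = tF (ψ c ⟨u, h⟩) := by
      intro c u h
      have heq : (⟨Y u, hYmem c u h⟩ : c.supp) = (ψ c).symm (tF (ψ c ⟨u, h⟩)) :=
        Subtype.ext (hYc c u h)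
      rw [heq, happ]
    have hinj : ∀ (c) (a b : V) (ha : a ∈ c.supp) (hb : b ∈ c.supp),
        ψ c ⟨a, ha⟩ = ψ c ⟨b, hb⟩ → a = b := by
      intro c a b ha hb h
      exact congrArg Subtype.val ((ψ c).toEquiv.injective h)
    have hKadj : ∀ (c) (a b : V) (ha : a ∈ c.supp) (hb : b ∈ c.supp),
        K44.Adj (ψ c ⟨a, ha⟩) (ψ c ⟨b, hb⟩) → K.Adj a b := by
      intro c a b ha hb h
      exact (ψ c).map_adj_iff.mp h
    have hKadj' : ∀ (c) (a b : V) (ha : a ∈ c.supp) (hb : b ∈ c.supp),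
        K.Adj a b → K44.Adj (ψ c ⟨a, ha⟩) (ψ c ⟨b, hb⟩) := by
      intro c a b ha hb h
      exact (ψ c).map_adj_iff.mpr h
    have heqv : ∀ (c) (a u : V) (ha : a ∈ c.supp) (hu : u ∈ c.supp),
        a = u ↔ ψ c ⟨a, ha⟩ = ψ c ⟨u, hu⟩ := by
      intro c a u ha hu
      exact ⟨fun h => congrArg (ψ c) (Subtype.ext h), hinj c a u ha hu⟩
    have heqX : ∀ (c) (a u : V) (ha : a ∈ c.supp) (hu : u ∈ c.supp),
        a = X u ↔ ψ c ⟨a, ha⟩ = sF (ψ c ⟨u, hu⟩) := by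
      intro c a u ha hu
      constructor
      · intro h
        have heq : (⟨a, ha⟩ : c.supp) = ⟨X u, hXmem c u hu⟩ := Subtype.ext h
        rw [heq, hXF]
      · intro h
        exact hinj c a (X u) ha (hXmem c u hu) (by rw [h, hXF])
    have heqY : ∀ (c) (a u : V) (ha : a ∈ c.supp) (hu : u ∈ c.supp),
        a = Y u ↔ ψ c ⟨a, ha⟩ = tF (ψ c ⟨u, hu⟩) := by
      intro c a u ha hu
      constructor
      · intro h
        have heq : (⟨a, ha⟩ : c.supp) = ⟨Y u, hYmem c u hu⟩ := Subtype.ext h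
        rw [heq, hYF]
      · intro h
        exact hinj c a (Y u) ha (hYmem c u hu) (by rw [h, hYF])
    have htransm : ∀ {a u : V}, a ∈ (cc u).supp → u ∈ (cc a).supp := by
      intro a u h
      exact (ConnectedComponent.mem_supp_iff _ _).mpr (hcceq h).symm
    have hcoviff : ∀ (c) (a b u : V) (ha : a ∈ c.supp) (hb : b ∈ c.supp) (hu : u ∈ c.supp),
        ((a = u ∧ b = X u) ∨ (a = X u ∧ b = Y u) ∨ (b = u ∧ a = X u) ∨ (b = X u ∧ a = Y u))
        ↔ coversF (ψ c ⟨u, hu⟩) (ψ c ⟨a, ha⟩) (ψ c ⟨b, hb⟩) := by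
      intro c a b u ha hb hu
      unfold coversF
      exact or_congr (and_congr (heqv c a u ha hu) (heqX c b u hb hu))
        (or_congr (and_congr (heqX c a u ha hu) (heqY c b u hb hu))
          (or_congr (and_congr (heqv c b u hb hu) (heqX c a u ha hu))
            (and_congr (heqX c b u hb hu) (heqY c a u ha hu))))
    refine ⟨X, Y, ?_, ?_, ?_, ?_⟩
    · intro v
      exact hKadj (cc v) v (X v) (hmem v) (hXmem (cc v) v (hmem v))
        (by rw [hXF]; exact (L1 _).1)
    · intro v
      exact hKadj (cc v) (X v) (Y v) (hXmem (cc v) v (hmem v)) (hYmem (cc v) v (hmem v))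
        (by rw [hXF (cc v) v (hmem v), hYF (cc v) v (hmem v)]; exact (L1 _).2.1)
    · -- cover
      intro a b hab
      have ha := hmem a
      have hb := hsuppmem hab
      have hfg := hKadj' (cc a) a b ha hb hab
      obtain ⟨h0, hcov⟩ := L2cov _ _ hfg
      set v : V := ((ψ (cc a)).symm h0).val with hvdef
      have hv : v ∈ (cc a).supp := Subtype.prop _
      have hψv : ψ (cc a) ⟨v, hv⟩ = h0 := by
        have heq : (⟨v, hv⟩ : (cc a).supp) = (ψ (cc a)).symm h0 := Subtype.ext rfl
        rw [heq, happ]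
      rw [← hψv] at hcov
      refine ⟨v, (hcoviff (cc a) a b v ha hb hv).mpr hcov, ?_⟩
      intro u hu
      have hu' : u ∈ (cc a).supp := by
        rcases hu with ⟨h1, h2⟩ | ⟨h1, h2⟩ | ⟨h1, h2⟩ | ⟨h1, h2⟩
        · exact h1 ▸ ha
        · refine htransm (show a ∈ (cc u).supp from ?_)
          rw [h1]; exact hXmem (cc u) u (hmem u)
        · exact h1 ▸ hb
        · have hbu : b ∈ (cc u).supp := by rw [h1]; exact hXmem (cc u) u (hmem u)
          have h3 := htransm hbu
          rw [ConnectedComponent.mem_supp_iff, ← hcc] at h3 ⊢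
          rw [h3]; exact hcceq hb
      have hcov' := (hcoviff (cc a) a b u ha hb hu').mp hu
      exact hinj (cc a) u v hu' hv (L2unique _ _ _ _ hcov' hcov)
    · -- nodup
      intro v
      have hne : ∀ (c) (a b : V) (ha : a ∈ c.supp) (hb : b ∈ c.supp) {fa fb : FF},
          ψ c ⟨a, ha⟩ = fa → ψ c ⟨b, hb⟩ = fb → fa ≠ fb → a ≠ b := by
        intro c a b ha hb fa fb h1 h2 hfne heq
        exact hfne (by rw [← h1, ← h2, (heqv c a b ha hb).mp heq])
      have n1 : Y v ≠ X v := hne _ _ _ (hYmem (cc v) v (hmem v)) (hXmem (cc v) v (hmem v))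
        (hYF (cc v) v (hmem v)) (hXF (cc v) v (hmem v)) (Ne.symm (L1 _).2.2.2.2)
      have n2 : Y v ≠ v := hne _ _ _ (hYmem (cc v) v (hmem v)) (hmem v)
        (hYF (cc v) v (hmem v)) rfl (Ne.symm (L1 _).2.2.2.1)
      have n3 : X v ≠ v := hne _ _ _ (hXmem (cc v) v (hmem v)) (hmem v)
        (hXF (cc v) v (hmem v)) rfl (Ne.symm (L1 _).2.2.1)
      have n4 : m v ≠ X (m v) := hne _ _ _ (hmem (m v)) (hXmem (cc (m v)) (m v) (hmem (m v)))
        rfl (hXF (cc (m v)) (m v) (hmem (m v))) ((L1 _).2.2.1)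
      have n5 : m v ≠ Y (m v) := hne _ _ _ (hmem (m v)) (hYmem (cc (m v)) (m v) (hmem (m v)))
        rfl (hYF (cc (m v)) (m v) (hmem (m v))) ((L1 _).2.2.2.1)
      have n6 : X (m v) ≠ Y (m v) := hne _ _ _ (hXmem (cc (m v)) (m v) (hmem (m v)))
        (hYmem (cc (m v)) (m v) (hmem (m v)))
        (hXF (cc (m v)) (m v) (hmem (m v))) (hYF (cc (m v)) (m v) (hmem (m v))) ((L1 _).2.2.2.2)
      have hcross9 : (Y v ≠ m v ∧ Y v ≠ X (m v) ∧ Y v ≠ Y (m v)) ∧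
          (X v ≠ m v ∧ X v ≠ X (m v) ∧ X v ≠ Y (m v)) ∧
          (v ≠ m v ∧ v ≠ X (m v) ∧ v ≠ Y (m v)) := by
        by_cases hcm : m v ∈ (cc v).supp
        · have hopp := hψ (cc v) ⟨v, hmem v⟩ hcm
          have hXm := hXF (cc v) (m v) hcm
          have hYm := hYF (cc v) (m v) hcm
          rw [hopp] at hXm hYm
          have hL3 := L3 (ψ (cc v) ⟨v, hmem v⟩)
          refine ⟨⟨?_, ?_, ?_⟩, ⟨?_, ?_, ?_⟩, ⟨?_, ?_, ?_⟩⟩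
          · exact hne _ _ _ (hYmem (cc v) v (hmem v)) hcm
              (hYF (cc v) v (hmem v)) hopp hL3.2.2.2.2.2.2.1
          · exact hne _ _ _ (hYmem (cc v) v (hmem v)) (hXmem (cc v) (m v) hcm)
              (hYF (cc v) v (hmem v)) hXm hL3.2.2.2.2.2.2.2.1
          · exact hne _ _ _ (hYmem (cc v) v (hmem v)) (hYmem (cc v) (m v) hcm)
              (hYF (cc v) v (hmem v)) hYm hL3.2.2.2.2.2.2.2.2
          · exact hne _ _ _ (hXmem (cc v) v (hmem v)) hcm
              (hXF (cc v) v (hmem v)) hopp hL3.2.2.2.1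
          · exact hne _ _ _ (hXmem (cc v) v (hmem v)) (hXmem (cc v) (m v) hcm)
              (hXF (cc v) v (hmem v)) hXm hL3.2.2.2.2.1
          · exact hne _ _ _ (hXmem (cc v) v (hmem v)) (hYmem (cc v) (m v) hcm)
              (hXF (cc v) v (hmem v)) hYm hL3.2.2.2.2.2.1
          · exact hne _ _ _ (hmem v) hcm rfl hopp hL3.1
          · exact hne _ _ _ (hmem v) (hXmem (cc v) (m v) hcm) rfl hXm hL3.2.1
          · exact hne _ _ _ (hmem v) (hYmem (cc v) (m v) hcm) rfl hYm hL3.2.2.1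
        · have hcross : ∀ (a b : V), a ∈ (cc v).supp → b ∈ (cc (m v)).supp → a ≠ b := by
            intro a b ha hb heq
            subst heq
            have h1 : cc a = cc (m v) := hcceq hb
            have h2 : cc a = cc v := hcceq ha
            exact hcm ((ConnectedComponent.mem_supp_iff _ _).mpr
              (by rw [← hcc, ← h1]; exact h2))
          exact ⟨⟨hcross _ _ (hYmem (cc v) v (hmem v)) (hmem (m v)),
              hcross _ _ (hYmem (cc v) v (hmem v)) (hXmem (cc (m v)) (m v) (hmem (m v))),
              hcross _ _ (hYmem (cc v) v (hmem v)) (hYmem (cc (m v)) (m v) (hmem (m v)))⟩,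
            ⟨hcross _ _ (hXmem (cc v) v (hmem v)) (hmem (m v)),
              hcross _ _ (hXmem (cc v) v (hmem v)) (hXmem (cc (m v)) (m v) (hmem (m v))),
              hcross _ _ (hXmem (cc v) v (hmem v)) (hYmem (cc (m v)) (m v) (hmem (m v)))⟩,
            ⟨hcross _ _ (hmem v) (hmem (m v)),
              hcross _ _ (hmem v) (hXmem (cc (m v)) (m v) (hmem (m v))),
              hcross _ _ (hmem v) (hYmem (cc (m v)) (m v) (hmem (m v)))⟩⟩
      obtain ⟨⟨c1, c2, c3⟩, ⟨c4, c5, c6⟩, ⟨c7, c8, c9⟩⟩ := hcross9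
      simp [List.nodup_cons, n1, n2, n3, n4, n5, n6, c1, c2, c3, c4, c5, c6, c7, c8, c9]
  obtain ⟨x, y, hxadj, hyadj, hcover, hnodup⟩ := main
  -- Step D: assemble the paths
  have hadj1 : ∀ u : V, G.Adj (y u) (x u) := fun u => hKG (hyadj u).symm
  have hadj2 : ∀ u : V, G.Adj (x u) u := fun u => hKG (hxadj u).symm
  have hadj3 : ∀ u : V, G.Adj u (m u) := hmG
  have hadj4 : ∀ u : V, G.Adj (m u) (x (m u)) := fun u => hKG (hxadj (m u))
  have hadj5 : ∀ u : V, G.Adj (x (m u)) (y (m u)) := fun u => hKG (hyadj (m u))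
  -- choose one endpoint of each matching edge
  let ord := Fintype.equivFin V
  set S : Set V := {u | ord u < ord (m u)} with hSdef
  have hSiff : ∀ u, u ∈ S ↔ ord u < ord (m u) := fun u => Iff.rfl
  have hS1 : ∀ u, u ∉ S → m u ∈ S := by
    intro u h
    rw [hSiff] at *
    rw [hmm]
    rcases lt_trichotomy (ord u) (ord (m u)) with h1 | h1 | h1
    · exact absurd h1 h
    · exact absurd (ord.injective h1) (Ne.symm (hmne u))
    · exact h1
  have hS2 : ∀ u, u ∈ S → m u ∉ S := by
    intro u h1 h2
    rw [hSiff] at h1 h2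
    rw [hmm] at h2
    exact absurd h1 (not_lt_of_gt h2)
  set pk : V → V := fun u => if u ∈ S then u else m u with hpkdef
  have hpkS : ∀ u, pk u ∈ S := by
    intro u
    rw [hpkdef]
    by_cases h : u ∈ S
    · simp [h]
    · simpa [h] using hS1 u h
  have hpk1 : ∀ u, u ∈ S → pk u = u := by intro u h; rw [hpkdef]; simp [h]
  have hpk2 : ∀ u, m u ∈ S → pk u = m u := by
    intro u h
    have hu : u ∉ S := fun hu => hS2 u hu h
    rw [hpkdef]; simp [hu]
  -- the family of walks
  set W : (u : V) → G.Walk (y u) (y (m u)) := fun u =>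
    Walk.cons (hadj1 u) (Walk.cons (hadj2 u) (Walk.cons (hadj3 u)
      (Walk.cons (hadj4 u) (Walk.cons (hadj5 u) Walk.nil)))) with hWdef
  have hedges : ∀ u, (W u).edges =
      [s(y u, x u), s(x u, u), s(u, m u), s(m u, x (m u)), s(x (m u), y (m u))] := by
    intro u; rw [hWdef]; rfl
  have hsupp' : ∀ u, (W u).support = [y u, x u, u, m u, x (m u), y (m u)] := by
    intro u; rw [hWdef]; rfl
  refine ⟨{T | ∃ u ∈ S, T = ⟨y u, y (m u), W u⟩}, ?_, ?_⟩
  · rintro T ⟨u, huS, rfl⟩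
    refine ⟨?_, ?_, s(u, m u), ⟨?_, ?_⟩, ?_⟩
    · rw [Walk.isPath_def, hsupp']
      exact hnodup u
    · rw [hWdef]; rfl
    · exact G.mem_edgeSet.mpr (hadj3 u)
    · exact fun h => hmK u (K.mem_edgeSet.mp h)
    · rw [hedges]; rfl
  · intro e he
    revert he
    refine Sym2.inductionOn e ?_
    intro a b he
    rw [mem_edgeSet] at he
    by_cases hK : K.Adj a b
    · -- a K-edge
      obtain ⟨v, hcov, huniq⟩ := hcover a b hK
      refine ⟨⟨y (pk v), y (m (pk v)), W (pk v)⟩, ⟨⟨pk v, hpkS v, rfl⟩, ?_⟩, ?_⟩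
      · rw [hedges]
        have hvm : pk v = v ∨ pk v = m v := by
          by_cases h : v ∈ S
          · exact Or.inl (hpk1 v h)
          · exact Or.inr (by rw [hpkdef]; simp [h])
        rcases hvm with h | h <;> rw [h] <;>
          rcases hcov with ⟨h1, h2⟩ | ⟨h1, h2⟩ | ⟨h1, h2⟩ | ⟨h1, h2⟩ <;>
            subst h1 <;> subst h2 <;> simp [Sym2.eq_iff, hmm]
      · rintro T' ⟨⟨u', hu'S, rfl⟩, hmemE⟩
        rw [hedges] at hmemE
        simp only [List.mem_cons, List.not_mem_nil, or_false] at hmemE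
        have hu'eq : u' = pk v := by
          rcases hmemE with h | h | h | h | h
          · rw [Sym2.eq_iff] at h
            have hv : u' = v := huniq u' (by tauto)
            rw [hv]; exact (hpk1 v (hv ▸ hu'S)).symm
          · rw [Sym2.eq_iff] at h
            have hv : u' = v := huniq u' (by tauto)
            rw [hv]; exact (hpk1 v (hv ▸ hu'S)).symm
          · exfalso
            rw [Sym2.eq_iff] at h
            rcases h with ⟨h1, h2⟩ | ⟨h1, h2⟩ <;> subst h1 <;> subst h2
            · exact hmK _ hK
            · exact hmK _ hK.symm
          · rw [Sym2.eq_iff] at h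
            have hv : m u' = v := huniq (m u') (by tauto)
            have hv' : u' = m v := by rw [← hv, hmm]
            rw [hv']; exact (hpk2 v (hv' ▸ hu'S)).symm
          · rw [Sym2.eq_iff] at h
            have hv : m u' = v := huniq (m u') (by tauto)
            have hv' : u' = m v := by rw [← hv, hmm]
            rw [hv']; exact (hpk2 v (hv' ▸ hu'S)).symm
        subst hu'eq
        rfl
    · -- the matching edge
      have hb : b = m a := hmuniq a b he hK
      subst hb
      refine ⟨⟨y (pk a), y (m (pk a)), W (pk a)⟩, ⟨⟨pk a, hpkS a, rfl⟩, ?_⟩, ?_⟩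
      · rw [hedges]
        by_cases h : a ∈ S
        · rw [hpk1 a h]; simp
        · have hpk3 : pk a = m a := by rw [hpkdef]; simp [h]
          rw [hpk3]
          simp [Sym2.eq_iff, hmm]
      · rintro T' ⟨⟨u', hu'S, rfl⟩, hmemE⟩
        rw [hedges] at hmemE
        simp only [List.mem_cons, List.not_mem_nil, or_false] at hmemE
        have hu'eq : u' = pk a := by
          rcases hmemE with h | h | h | h | h
          · exfalso
            rw [Sym2.eq_iff] at h
            rcases h with ⟨h1, h2⟩ | ⟨h1, h2⟩ <;> subst h1 <;> rw [h2] at hK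
            · exact hK (hyadj u').symm
            · exact hK (hyadj u')
          · exfalso
            rw [Sym2.eq_iff] at h
            rcases h with ⟨h1, h2⟩ | ⟨h1, h2⟩ <;> subst h1 <;> rw [h2] at hK
            · exact hK (hxadj _).symm
            · exact hK (hxadj _)
          · rw [Sym2.eq_iff] at h
            rcases h with ⟨h1, h2⟩ | ⟨h1, h2⟩
            · rw [← h1]; exact (hpk1 a (h1 ▸ hu'S)).symm
            · have hv' : u' = m a := by rw [← h2]
              rw [hv']; exact (hpk2 a (hv' ▸ hu'S)).symm
          · exfalso
            rw [Sym2.eq_iff] at h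
            rcases h with ⟨h1, h2⟩ | ⟨h1, h2⟩ <;> subst h1 <;> rw [h2] at hK
            · exact hK (hxadj (m u'))
            · exact hK (hxadj (m u')).symm
          · exfalso
            rw [Sym2.eq_iff] at h
            rcases h with ⟨h1, h2⟩ | ⟨h1, h2⟩ <;> subst h1 <;> rw [h2] at hK
            · exact hK (hyadj (m u'))
            · exact hK (hyadj (m u')).symm
        subst hu'eq
        rfl
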